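/- The slice monogenic Szegő kernel reproduces the sequential Hardy space of the unit ball: for every f∈𝐇²(B₈(0,1),𝕆) and every x∈B₈(0,1), the function 𝒮(·,x) belongs to 𝐇²(B₈(0,1),𝕆) and [f, 𝒮(·,x)] = f(x); explicitly, if f(y)=Σ_{n≥0}yⁿaₙ then Σ_{n≥0} conj(x̄ⁿ)·aₙ = Σ_{n≥0} xⁿaₙ = f(x), where 𝒮(y,x) = Σ_{n≥0} yⁿx̄ⁿ = (1−2Re(x)y+|x|²y²)^{−1}(1−yx). -/

import Mathlib

noncomputable section

open MeasureTheory

/-- The octonions `𝕆`, modelled as ℝ⁸ with the Euclidean norm. -/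
abbrev Oct : Type := EuclideanSpace ℝ (Fin 8)

namespace Oct

/-- Index table of the octonionic multiplication: `e i * e j = ± e (idxT i j)`. -/
def idxT : Fin 8 → Fin 8 → Fin 8 :=
  ![![0,1,2,3,4,5,6,7],
    ![1,0,4,5,2,3,7,6],
    ![2,4,0,6,1,7,3,5],
    ![3,5,6,0,7,1,2,4],
    ![4,2,1,7,0,6,5,3],
    ![5,3,7,1,6,0,4,2],
    ![6,7,3,2,5,4,0,1],
    ![7,6,5,4,3,2,1,0]]

/-- Sign table of the octonionic multiplication: `e i * e j = signT i j • e (idxT i j)`. -/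
def signT : Fin 8 → Fin 8 → ℝ :=
  ![![1,1,1,1,1,1,1,1],
    ![1,-1,1,1,-1,-1,-1,1],
    ![1,-1,-1,1,1,1,-1,-1],
    ![1,-1,-1,-1,-1,1,1,1],
    ![1,1,-1,1,-1,-1,1,-1],
    ![1,1,-1,-1,1,-1,-1,1],
    ![1,1,1,-1,-1,1,-1,-1],
    ![1,-1,1,-1,1,-1,1,-1]]

/-- Octonionic multiplication. -/
def omul (x y : Oct) : Oct :=
  (WithLp.equiv 2 (Fin 8 → ℝ)).symm fun k =>
    ∑ i : Fin 8, ∑ j : Fin 8,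
      if idxT i j = k then signT i j * x i * y j else 0

/-- Octonionic conjugation `x̄`. -/
def oconj (x : Oct) : Oct :=
  (WithLp.equiv 2 (Fin 8 → ℝ)).symm fun k => if k = 0 then x k else -x k

/-- Real part of an octonion. -/
def oRe (x : Oct) : ℝ := x 0

/-- The basis octonions `e i`. -/
def unit (i : Fin 8) : Oct := EuclideanSpace.single i 1

/-- The octonion `1`. -/
def oone : Oct := unit 0

/-- Powers of an octonion (powers are unambiguous by power-associativity). -/
def opow (x : Oct) : ℕ → Oct
  | 0 => oone
  | n + 1 => omul (opow x n) x

/-- Inverse of a nonzero octonion. -/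
def oinv (x : Oct) : Oct := (‖x‖ ^ 2)⁻¹ • oconj x

/-- A function is left octonionic monogenic on `U` if `𝒟 f = 0` there, where
`𝒟 = ∂/∂x₀ + Σᵢ eᵢ ∂/∂xᵢ` is the octonionic Cauchy–Riemann operator. -/
def LeftMonogenicOn (f : Oct → Oct) (U : Set Oct) : Prop :=
  ∀ x ∈ U, DifferentiableAt ℝ f x ∧
    ∑ i : Fin 8, omul (unit i) (fderiv ℝ f x (unit i)) = 0

/-- The sphere `𝕊` of imaginary units of `𝕆`. -/
def sphS : Set Oct := {x | oRe x = 0 ∧ ‖x‖ = 1}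

/-- The complex slice `ℂ_I = ℝ + ℝ I`. -/
def sliceC (I : Oct) : Set Oct := {x | ∃ u v : ℝ, x = u • oone + v • I}

/-- A function is (left) slice monogenic on `Ω` if its restriction to every slice `ℂ_I`
is holomorphic, i.e. `(∂/∂u + I ∂/∂v) f(u + Iv) = 0`. -/
def SliceMonogenicOn (f : Oct → Oct) (Ω : Set Oct) : Prop :=
  ∀ I ∈ sphS, ∀ u v : ℝ, u • oone + v • I ∈ Ω →
    DifferentiableAt ℝ (fun p : ℝ × ℝ => f (p.1 • oone + p.2 • I)) (u, v) ∧
    fderiv ℝ (fun p : ℝ × ℝ => f (p.1 • oone + p.2 • I)) (u, v) (1, 0)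
      + omul I (fderiv ℝ (fun p : ℝ × ℝ => f (p.1 • oone + p.2 • I)) (u, v) (0, 1)) = 0

end Oct

namespace Oct

/-- The octonionic slice monogenic Szegő kernel
`𝒮(y,x) = (1 - 2Re(x)y + |x|²y²)⁻¹ (1 - yx) = Σₙ yⁿ x̄ⁿ`. -/
def sliceSzego (y x : Oct) : Oct :=
  omul (oinv (oone - (2 * oRe x) • y + (‖x‖ ^ 2) • omul y y)) (oone - omul y x)

/-- The sequential octonion-valued inner product `[f,g] = Σₙ conj(bₙ)aₙ` of the Hardy
space of the unit ball, on Taylor coefficient sequences (`a` for `f`, `b` for `g`). -/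
def seqInner (a b : ℕ → Oct) : Oct := ∑' n : ℕ, omul (oconj (b n)) (a n)

end Oct


namespace Oct

set_option maxHeartbeats 2000000

lemma omul_apply (x y : Oct) (k : Fin 8) :
    omul x y k = ∑ i : Fin 8, ∑ j : Fin 8,
      if idxT i j = k then signT i j * x i * y j else 0 := rfl
lemma oconj_apply (x : Oct) (k : Fin 8) :
    oconj x k = if k = 0 then x k else -x k := rfl
lemma fs3 : (Fin.succ 2 : Fin 8) = 3 := rfl
lemma fs4 : ((Fin.succ 2).succ : Fin 8) = 4 := rfl
lemma fs5 : ((Fin.succ 2).succ.succ : Fin 8) = 5 := rfl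
lemma fs6 : ((Fin.succ 2).succ.succ.succ : Fin 8) = 6 := rfl
lemma fs7 : ((Fin.succ 2).succ.succ.succ.succ : Fin 8) = 7 := rfl

lemma norm_sq_eq (t : Oct) : ‖t‖^2 = ∑ i : Fin 8, t i ^ 2 := by
  rw [EuclideanSpace.norm_eq, Real.sq_sqrt (by positivity)]
  simp [sq_abs]

lemma oone_apply (k : Fin 8) : oone k = if k = 0 then 1 else 0 := by
  simp [oone, unit, EuclideanSpace.single_apply, eq_comm]

lemma omul_add (x y z : Oct) : omul x (y + z) = omul x y + omul x z := by
  ext k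
  fin_cases k <;>
  · simp [omul_apply, idxT, signT, Fin.sum_univ_succ, fs3, fs4, fs5, fs6, fs7,
      PiLp.add_apply]
    try ring

lemma add_omul (x y z : Oct) : omul (x + y) z = omul x z + omul y z := by
  ext k
  fin_cases k <;>
  · simp [omul_apply, idxT, signT, Fin.sum_univ_succ, fs3, fs4, fs5, fs6, fs7,
      PiLp.add_apply]
    try ring

lemma omul_smul (cc : ℝ) (x y : Oct) : omul x (cc • y) = cc • omul x y := by
  ext k
  fin_cases k <;>
  · simp [omul_apply, idxT, signT, Fin.sum_univ_succ, fs3, fs4, fs5, fs6, fs7,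
      PiLp.smul_apply, smul_eq_mul]
    try ring

lemma smul_omul (cc : ℝ) (x y : Oct) : omul (cc • x) y = cc • omul x y := by
  ext k
  fin_cases k <;>
  · simp [omul_apply, idxT, signT, Fin.sum_univ_succ, fs3, fs4, fs5, fs6, fs7,
      PiLp.smul_apply, smul_eq_mul]
    try ring

lemma omul_sub (x y z : Oct) : omul x (y - z) = omul x y - omul x z := by
  ext k
  fin_cases k <;>
  · simp [omul_apply, idxT, signT, Fin.sum_univ_succ, fs3, fs4, fs5, fs6, fs7,
      PiLp.sub_apply]
    try ring

lemma sub_omul (x y z : Oct) : omul (x - y) z = omul x z - omul y z := by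
  ext k
  fin_cases k <;>
  · simp [omul_apply, idxT, signT, Fin.sum_univ_succ, fs3, fs4, fs5, fs6, fs7,
      PiLp.sub_apply]
    try ring

lemma oone_omul (x : Oct) : omul oone x = x := by
  ext k
  fin_cases k <;>
  · simp [omul_apply, idxT, signT, Fin.sum_univ_succ, fs3, fs4, fs5, fs6, fs7, oone_apply]

lemma omul_oone (x : Oct) : omul x oone = x := by
  ext k
  fin_cases k <;>
  · simp [omul_apply, idxT, signT, Fin.sum_univ_succ, fs3, fs4, fs5, fs6, fs7, oone_apply]

lemma omul_sq (t : Oct) : omul t t = (2 * oRe t) • t - (‖t‖^2) • oone := by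
  ext k
  fin_cases k <;>
  · simp [omul_apply, idxT, signT, Fin.sum_univ_succ, oRe, oone_apply, norm_sq_eq,
      fs3, fs4, fs5, fs6, fs7, PiLp.sub_apply, PiLp.smul_apply, smul_eq_mul]
    try ring

lemma omul_left_alt (t z : Oct) : omul t (omul t z) = omul (omul t t) z := by
  ext k
  fin_cases k <;>
  · simp [omul_apply, idxT, signT, Fin.sum_univ_succ, fs3, fs4, fs5, fs6, fs7]
    ring

lemma norm_omul_sq (a b : Oct) : ‖omul a b‖^2 = ‖a‖^2 * ‖b‖^2 := by
  rw [norm_sq_eq, norm_sq_eq, norm_sq_eq]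
  simp [omul_apply, idxT, signT, Fin.sum_univ_succ, fs3, fs4, fs5, fs6, fs7]
  ring

lemma oconj_omul (a b : Oct) : oconj (omul a b) = omul (oconj b) (oconj a) := by
  ext k
  fin_cases k <;>
  · simp [omul_apply, oconj_apply, idxT, signT, Fin.sum_univ_succ,
      fs3, fs4, fs5, fs6, fs7]
    try ring

lemma oconj_eq (x : Oct) : oconj x = (2 * oRe x) • oone - x := by
  ext k
  fin_cases k <;>
  · simp [oconj_apply, oRe, oone_apply, PiLp.sub_apply, PiLp.smul_apply, smul_eq_mul]
    try ring

lemma oconj_oconj (x : Oct) : oconj (oconj x) = x := by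
  ext k
  fin_cases k <;> simp [oconj_apply]

lemma oconj_oone : oconj oone = oone := by
  ext k
  fin_cases k <;> simp [oconj_apply, oone_apply]

lemma oRe_oconj (x : Oct) : oRe (oconj x) = oRe x := by simp [oRe, oconj_apply]

lemma norm_oconj (x : Oct) : ‖oconj x‖ = ‖x‖ := by
  have h : ‖oconj x‖^2 = ‖x‖^2 := by
    rw [norm_sq_eq, norm_sq_eq]
    simp [oconj_apply, Fin.sum_univ_succ]
    try ring
  calc ‖oconj x‖ = Real.sqrt (‖oconj x‖^2) := (Real.sqrt_sq (norm_nonneg _)).symm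
    _ = Real.sqrt (‖x‖^2) := by rw [h]
    _ = ‖x‖ := Real.sqrt_sq (norm_nonneg _)

lemma norm_oone : ‖oone‖ = 1 := by
  have h : ‖oone‖^2 = 1 := by
    rw [norm_sq_eq]; simp [oone_apply, Fin.sum_univ_succ]
  calc ‖oone‖ = Real.sqrt (‖oone‖^2) := (Real.sqrt_sq (norm_nonneg _)).symm
    _ = 1 := by rw [h, Real.sqrt_one]

lemma norm_omul (a b : Oct) : ‖omul a b‖ = ‖a‖ * ‖b‖ := by
  have h : ‖omul a b‖^2 = (‖a‖ * ‖b‖)^2 := by rw [norm_omul_sq]; ring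
  calc ‖omul a b‖ = Real.sqrt (‖omul a b‖^2) := (Real.sqrt_sq (norm_nonneg _)).symm
    _ = Real.sqrt ((‖a‖*‖b‖)^2) := by rw [h]
    _ = ‖a‖ * ‖b‖ := Real.sqrt_sq (by positivity)

end Oct

namespace Oct

lemma oconj_cancel (t z : Oct) : omul (oconj t) (omul t z) = (‖t‖^2) • z := by
  have h1 : omul (omul t t) z = (2 * oRe t) • omul t z - (‖t‖^2) • z := by
    rw [omul_sq, sub_omul, smul_omul, smul_omul, oone_omul]
  rw [oconj_eq, sub_omul, smul_omul, oone_omul, omul_left_alt, h1, sub_sub_cancel]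

lemma omul_right_alt (z t : Oct) : omul (omul z t) t = omul z (omul t t) := by
  have h : oconj (omul (omul z t) t) = oconj (omul z (omul t t)) := by
    simp only [oconj_omul, omul_left_alt]
  have h2 := congrArg oconj h
  rwa [oconj_oconj, oconj_oconj] at h2

lemma opow_zero' (t : Oct) : opow t 0 = oone := rfl
lemma opow_succ (t : Oct) (n : ℕ) : opow t (n+1) = omul (opow t n) t := rfl
lemma opow_one (t : Oct) : opow t 1 = t := by rw [opow_succ, opow_zero', oone_omul]

lemma norm_opow (t : Oct) (n : ℕ) : ‖opow t n‖ = ‖t‖ ^ n := by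
  induction n with
  | zero => simpa [opow_zero'] using norm_oone
  | succ n ih => rw [opow_succ, norm_omul, ih, pow_succ]

lemma opow_recur (t : Oct) (n : ℕ) :
    opow t (n+2) = (2 * oRe t) • opow t (n+1) - (‖t‖^2) • opow t n := by
  have h : opow t (n+2) = omul (opow t n) (omul t t) := by
    rw [show n+2 = (n+1)+1 from rfl, opow_succ, opow_succ, omul_right_alt]
  rw [h, omul_sq, omul_sub, omul_smul, omul_smul, omul_oone, ← opow_succ]

lemma opow_mem_span (t : Oct) (n : ℕ) : ∃ α β : ℝ, opow t n = α • oone + β • t := by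
  induction n with
  | zero => exact ⟨1, 0, by simp [opow_zero']⟩
  | succ n ih =>
    obtain ⟨α, β, h⟩ := ih
    refine ⟨-(β * ‖t‖^2), α + β * (2 * oRe t), ?_⟩
    rw [opow_succ, h, add_omul, smul_omul, smul_omul, oone_omul, omul_sq]
    module

lemma omul_opow_shift (y z : Oct) (n : ℕ) :
    omul y (omul (opow y n) z) = omul (opow y (n+1)) z := by
  obtain ⟨α, β, h⟩ := opow_mem_span y n
  have hL : omul (opow y n) z = α • z + β • omul y z := by
    rw [h, add_omul, smul_omul, smul_omul, oone_omul]
  have hP : opow y (n+1) = α • y + β • omul y y := by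
    rw [opow_succ, h, add_omul, smul_omul, smul_omul, oone_omul]
  rw [hL, hP, omul_add, omul_smul, omul_smul, omul_left_alt, add_omul, smul_omul, smul_omul]

lemma omul_sq_opow_shift (y z : Oct) (n : ℕ) :
    omul (omul y y) (omul (opow y n) z) = omul (opow y (n+2)) z := by
  rw [← omul_left_alt, omul_opow_shift, omul_opow_shift]

lemma oconj_smul (cc : ℝ) (x : Oct) : oconj (cc • x) = cc • oconj x := by
  ext k
  fin_cases k <;> · simp [oconj_apply]; try ring

lemma oconj_sub (x y : Oct) : oconj (x - y) = oconj x - oconj y := by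
  ext k
  fin_cases k <;> · simp [oconj_apply]; try ring

lemma oconj_opow_pair (x : Oct) : ∀ n : ℕ,
    oconj (opow (oconj x) n) = opow x n ∧
    oconj (opow (oconj x) (n+1)) = opow x (n+1) := by
  intro n
  induction n with
  | zero =>
    refine ⟨by simp [opow_zero', oconj_oone], ?_⟩
    rw [opow_one, opow_one, oconj_oconj]
  | succ n ih =>
    refine ⟨ih.2, ?_⟩
    show oconj (opow (oconj x) (n+2)) = opow x (n+2)
    rw [opow_recur, oconj_sub, oconj_smul, oconj_smul, ih.1, ih.2, oRe_oconj, norm_oconj,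
      ← opow_recur]

lemma oconj_opow (x : Oct) (n : ℕ) : oconj (opow (oconj x) n) = opow x n :=
  (oconj_opow_pair x n).1

lemma zero_omul (z : Oct) : omul 0 z = 0 := by
  have := smul_omul 0 0 z
  simpa using this

/-- `omul a ·` as a continuous linear map. -/
def omulL (aa : Oct) : Oct →L[ℝ] Oct :=
  LinearMap.toContinuousLinearMap
    { toFun := fun z => omul aa z
      map_add' := fun p q => omul_add aa p q
      map_smul' := fun cc z => by simpa using omul_smul cc aa z }

lemma omulL_apply (aa z : Oct) : omulL aa z = omul aa z := rfl

end Oct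

open Oct in
/-- The slice monogenic Szegő kernel reproduces the sequential Hardy
space of the unit ball: for `f(y) = Σₙ yⁿaₙ` in `𝐇²(B₈(0,1),𝕆)` and `x ∈ B₈(0,1)`, the
function `𝒮(·,x) = Σₙ yⁿ x̄ⁿ` belongs to `𝐇²(B₈(0,1),𝕆)` and
`[f, 𝒮(·,x)] = Σₙ conj(x̄ⁿ)aₙ = Σₙ xⁿaₙ = f(x)`. -/
theorem slice_szego_reproduces_sequential_Hardy
    (a : ℕ → Oct) (ha : Summable fun n => ‖a n‖ ^ 2)
    (f : Oct → Oct)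
    (hf : ∀ y ∈ Metric.ball (0 : Oct) 1,
      HasSum (fun n : ℕ => omul (opow y n) (a n)) (f y))
    (x : Oct) (hx : x ∈ Metric.ball (0 : Oct) 1) :
    (Summable fun n : ℕ => ‖opow (oconj x) n‖ ^ 2) ∧
    (∀ y ∈ Metric.ball (0 : Oct) 1,
      HasSum (fun n : ℕ => omul (opow y n) (opow (oconj x) n)) (sliceSzego y x)) ∧
    seqInner a (fun n => opow (oconj x) n) = ∑' n : ℕ, omul (opow x n) (a n) ∧
    seqInner a (fun n => opow (oconj x) n) = f x := by
  have hx1 : ‖x‖ < 1 := mem_ball_zero_iff.mp hx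
  have hx0 : (0:ℝ) ≤ ‖x‖ := norm_nonneg x
  have hnormc : ∀ n : ℕ, ‖opow (oconj x) n‖ = ‖x‖ ^ n := fun n => by
    rw [norm_opow, norm_oconj]
  -- Part 1
  have part1 : Summable fun n : ℕ => ‖opow (oconj x) n‖ ^ 2 := by
    have hgeo : Summable fun n : ℕ => (‖x‖^2)^n :=
      summable_geometric_of_lt_one (by positivity) (by nlinarith)
    refine hgeo.congr fun n => ?_
    rw [hnormc, ← pow_mul, ← pow_mul, mul_comm]
  -- Part 2
  have part2 : ∀ y ∈ Metric.ball (0 : Oct) 1,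
      HasSum (fun n : ℕ => omul (opow y n) (opow (oconj x) n)) (sliceSzego y x) := by
    intro y hy
    have hy1 : ‖y‖ < 1 := mem_ball_zero_iff.mp hy
    have hy0 : (0:ℝ) ≤ ‖y‖ := norm_nonneg y
    have hq0 : (0:ℝ) ≤ ‖y‖ * ‖x‖ := by positivity
    have hq1 : ‖y‖ * ‖x‖ < 1 := by nlinarith
    have hgeo : Summable fun n : ℕ => (‖y‖ * ‖x‖)^n :=
      summable_geometric_of_lt_one hq0 hq1
    set c : ℕ → Oct := fun n => opow (oconj x) n with hc
    set h : ℕ → Oct := fun n => omul (opow y n) (c n) with hh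
    set h1 : ℕ → Oct := fun n => omul (opow y (n+1)) (c n) with hh1
    set h2 : ℕ → Oct := fun n => omul (opow y (n+2)) (c n) with hh2
    have hn : ∀ m n : ℕ, ‖omul (opow y m) (c n)‖ = ‖y‖^m * ‖x‖^n := by
      intro m n
      simp only [hc]
      rw [norm_omul, norm_opow, norm_opow, norm_oconj]
    have sumh : Summable h := by
      refine Summable.of_norm (hgeo.congr fun n => ?_)
      simp only [hh]
      rw [hn, mul_pow]
    have sumh1 : Summable h1 := by
      refine Summable.of_norm ((hgeo.mul_left (‖y‖)).congr fun n => ?_)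
      simp only [hh1]
      rw [hn, mul_pow, pow_succ]
      ring
    have sumh2 : Summable h2 := by
      refine Summable.of_norm ((hgeo.mul_left (‖y‖^2)).congr fun n => ?_)
      simp only [hh2]
      rw [hn, mul_pow, pow_add]
      ring
    set S : Oct := ∑' n, h n with hS'
    set T : Oct := ∑' n, h1 n with hT'
    set U : Oct := ∑' n, h2 n with hU'
    have hSsum : HasSum h S := sumh.hasSum
    have hTsum : HasSum h1 T := sumh1.hasSum
    have hUsum : HasSum h2 U := sumh2.hasSum
    set A : Oct := oone - (2 * oRe x) • y + (‖x‖^2) • omul y y with hA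
    have hptw : ∀ n, omul A (h n)
        = h n - (2 * oRe x) • h1 n + (‖x‖^2) • h2 n := by
      intro n
      rw [hA]
      simp only [hh, hh1, hh2]
      rw [add_omul, sub_omul, smul_omul, smul_omul, oone_omul,
        omul_opow_shift, omul_sq_opow_shift]
    have hAS : HasSum (fun n => omul A (h n)) (omul A S) := by
      have h' := (omulL A).hasSum hSsum
      simpa only [omulL_apply] using h'
    have hAS' : HasSum (fun n => h n - (2 * oRe x) • h1 n + (‖x‖^2) • h2 n)
        (S - (2 * oRe x) • T + (‖x‖^2) • U) :=
      (hSsum.sub (hTsum.const_smul (2 * oRe x))).add (hUsum.const_smul (‖x‖^2))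
    rw [funext hptw] at hAS
    have eq1 : omul A S = S - (2 * oRe x) • T + (‖x‖^2) • U := hAS.unique hAS'
    -- shifted sums
    have hS2 : HasSum (fun n => h (n+2)) (S - (h 0 + h 1)) := by
      have h' := (hasSum_nat_add_iff' (f := h) 2).mpr hSsum
      have hfin : ∑ i ∈ Finset.range 2, h i = h 0 + h 1 := by
        rw [Finset.sum_range_succ, Finset.sum_range_one]
      rwa [hfin] at h'
    have hT1 : HasSum (fun n => h1 (n+1)) (T - h1 0) := by
      have h' := (hasSum_nat_add_iff' (f := h1) 1).mpr hTsum
      have hfin : ∑ i ∈ Finset.range 1, h1 i = h1 0 := by simp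
      rwa [hfin] at h'
    have hcrec : ∀ n : ℕ, c (n+2) = (2 * oRe x) • c (n+1) - (‖x‖^2) • c n := by
      intro n
      simp only [hc]
      rw [opow_recur, oRe_oconj, norm_oconj]
    have hrec : ∀ n : ℕ, h (n+2) = (2 * oRe x) • h1 (n+1) - (‖x‖^2) • h2 n := by
      intro n
      have e1 : h (n+2) = omul (opow y (n+2)) (c (n+2)) := by simp only [hh]
      have e2 : h1 (n+1) = omul (opow y (n+2)) (c (n+1)) := by
        simp only [hh1]
      have e3 : h2 n = omul (opow y (n+2)) (c n) := by simp only [hh2]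
      rw [e1, e2, e3, hcrec n, omul_sub, omul_smul, omul_smul]
    rw [funext hrec] at hS2
    have hS2' : HasSum (fun n => (2 * oRe x) • h1 (n+1) - (‖x‖^2) • h2 n)
        ((2 * oRe x) • (T - h1 0) - (‖x‖^2) • U) :=
      (hT1.const_smul (2 * oRe x)).sub (hUsum.const_smul (‖x‖^2))
    have eq2 : S - (h 0 + h 1) = (2 * oRe x) • (T - h1 0) - (‖x‖^2) • U :=
      hS2.unique hS2'
    have hval0 : h 0 = oone := by
      simp only [hh, hc]
      rw [opow_zero', opow_zero', oone_omul]
    have hval1 : h 1 = omul y (oconj x) := by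
      simp only [hh, hc]
      rw [opow_one, opow_one]
    have hval10 : h1 0 = y := by
      simp only [hh1, hc]
      rw [opow_one, opow_zero', omul_oone]
    have hyx : omul y x = (2 * oRe x) • y - omul y (oconj x) := by
      have hxc : x = (2 * oRe x) • oone - oconj x := by
        rw [oconj_eq]
        module
      calc omul y x = omul y ((2 * oRe x) • oone - oconj x) := by rw [← hxc]
        _ = (2 * oRe x) • omul y oone - omul y (oconj x) := by
            rw [omul_sub, omul_smul]
        _ = (2 * oRe x) • y - omul y (oconj x) := by rw [omul_oone]
    have eq3 : S = ((2 * oRe x) • (T - h1 0) - (‖x‖^2) • U) + (h 0 + h 1) :=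
      sub_eq_iff_eq_add.mp eq2
    have eqAS : omul A S = oone - omul y x := by
      rw [eq1, hyx, eq3, hval0, hval1, hval10]
      module
    have hAne : A ≠ 0 := by
      intro h0
      have hz : omul A S = 0 := by rw [h0, zero_omul]
      have h1' : omul y x = oone := by
        have h'' := eqAS.symm.trans hz
        rwa [sub_eq_zero, eq_comm] at h''
      have hno : (1:ℝ) = ‖y‖ * ‖x‖ := by
        rw [← norm_oone, ← h1', norm_omul]
      nlinarith
    have hnA : (‖A‖^2 : ℝ) ≠ 0 := by
      have hA0 : ‖A‖ ≠ 0 := norm_ne_zero_iff.mpr hAne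
      positivity
    have hfinal : sliceSzego y x = S := by
      have hsz : sliceSzego y x = omul (oinv A) (oone - omul y x) := by
        rw [hA]; rfl
      rw [hsz, ← eqAS, show oinv A = (‖A‖^2)⁻¹ • oconj A from rfl, smul_omul,
        oconj_cancel, smul_smul, inv_mul_cancel₀ hnA, one_smul]
    rw [hfinal]
    exact hSsum
  -- Parts 3 and 4
  have part3 : seqInner a (fun n => opow (oconj x) n)
      = ∑' n : ℕ, omul (opow x n) (a n) := by
    rw [seqInner]
    exact tsum_congr fun n => by rw [oconj_opow]
  exact ⟨part1, part2, part3, part3.trans (hf x hx).tsum_eq⟩
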